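/- Let k be even, n a multiple of k, f a skew-symmetric function on [n]^k, and σ a permutation of [n]. Define g(i_1,...,i_k) = f(σ(i_1),...,σ(i_k)). Then g is skew-symmetric and Pf(g) = sgn(σ) · Pf(f). -/

import Mathlib

open Finset Equiv MvPolynomial

open scoped Classical

noncomputable section

/-- The position of the `j`-th element of the `i`-th block. -/
def bpos (m k : ℕ) (i : Fin m) (j : Fin k) : Fin (m * k) :=
  ⟨k * (i : ℕ) + (j : ℕ), by
    have hi := i.isLt
    have hj := j.isLt
    calc k * (i : ℕ) + (j : ℕ) < k * (i : ℕ) + k := by omega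
      _ = k * ((i : ℕ) + 1) := by ring
      _ ≤ k * m := Nat.mul_le_mul_left k hi
      _ = m * k := Nat.mul_comm k m⟩

/-- Each block of the (oriented) partition is listed in increasing order. -/
def IsBlockMono (m k : ℕ) (π : Equiv.Perm (Fin (m * k))) : Prop :=
  ∀ i : Fin m, StrictMono fun j : Fin k => π (bpos m k i j)

/-- The blocks are listed in increasing order of their first elements. -/
def IsLeadMono (m k : ℕ) (π : Equiv.Perm (Fin (m * k))) : Prop :=
  ∀ (i i' : Fin m) (j : Fin k), i < i' →
    π (bpos m k i ⟨0, j.pos⟩) < π (bpos m k i' ⟨0, j.pos⟩)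

/-- Canonical representative of a set partition of `[n]`, `n = m*k`, into `m` blocks of
size `k`: each block increasing and blocks ordered by their minima. -/
def IsPartRep (m k : ℕ) (π : Equiv.Perm (Fin (m * k))) : Prop :=
  IsBlockMono m k π ∧ IsLeadMono m k π

/-- A `k`-ary function is skew-symmetric. -/
def IsSkewFun {k : ℕ} {α R : Type*} [CommRing R] (f : (Fin k → α) → R) : Prop :=
  ∀ (σ : Equiv.Perm (Fin k)) (v : Fin k → α),
    f (v ∘ σ) = (Equiv.Perm.sign σ : ℤ) • f v

/-- The hyperpfaffian of a skew-symmetric `k`-ary function on `[m*k]`: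
the signed sum over all set partitions of `[m*k]` into `m` blocks of size `k`. -/
def hyperPf (m k : ℕ) {R : Type*} [CommRing R]
    (f : (Fin k → Fin (m * k)) → R) : R :=
  ∑ π ∈ Finset.univ.filter (IsPartRep m k),
    (Equiv.Perm.sign π : ℤ) • ∏ i : Fin m, f fun j => π (bpos m k i j)

/-- A polynomial in `k` variables is skew-symmetric. -/
def IsSkewPoly {k : ℕ} {R : Type*} [CommRing R] (f : MvPolynomial (Fin k) R) : Prop :=
  ∀ σ : Equiv.Perm (Fin k),
    MvPolynomial.rename (⇑σ) f = (Equiv.Perm.sign σ : ℤ) • f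

/-- The hyperpfaffian `Pf (f(x_S))` of the values of a polynomial `f` in `k` variables
at the variables indexed by the `k`-subsets `S` of `[m*k]`. -/
def hyperPfPoly (m k : ℕ) {R : Type*} [CommRing R]
    (f : MvPolynomial (Fin k) R) : MvPolynomial (Fin (m * k)) R :=
  ∑ π ∈ Finset.univ.filter (IsPartRep m k),
    (Equiv.Perm.sign π : ℤ) •
      ∏ i : Fin m, MvPolynomial.rename (fun j => π (bpos m k i j)) f

/-- The Vandermonde product. -/
def vand (n : ℕ) (R : Type*) [CommRing R] : MvPolynomial (Fin n) R :=
  ∏ p ∈ Finset.univ.filter (fun p : Fin n × Fin n => p.1 < p.2),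
    (MvPolynomial.X p.2 - MvPolynomial.X p.1)

/-- The coefficient of `f` at the monomial with exponent vector `r`. -/
def coeffOf {k : ℕ} {R : Type*} [CommRing R] (f : MvPolynomial (Fin k) R)
    (r : Fin k → ℕ) : R :=
  MvPolynomial.coeff (Finsupp.equivFunOnFinite.symm r) f

/-- Membership in `Γ_{n,k}`: a strictly increasing composition of `k/2*(n-1)`
into `k` distinct nonnegative parts. -/
def InGamma (n k : ℕ) (r : Fin k → ℕ) : Prop :=
  StrictMono r ∧ ∑ j, r j = k / 2 * (n - 1)

/-- Canonical representative of an element `β` of `R_{n,k}`, encoded as a permutation `e` of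
`Fin (m*k)` (identified with `{0,…,n-1}`): the blocks of `e` are the compositions of `β`,
each block is increasing and sums to `k/2*(n-1)`, and the blocks are ordered canonically. -/
def IsWeightRep (m k : ℕ) (e : Equiv.Perm (Fin (m * k))) : Prop :=
  IsPartRep m k e ∧
    ∀ i : Fin m, ∑ j : Fin k, ((e (bpos m k i j)) : ℕ) = k / 2 * (m * k - 1)

/-- The weight of the element `x` of `[m*k]` in the weighted oriented partition with
oriented partition (representative) `π` and weight vectors `w`. -/
def wtOf (m k : ℕ) (π : Equiv.Perm (Fin (m * k))) (w : Fin m → Fin k → ℕ) :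
    Fin (m * k) → ℕ := fun x =>
  w ⟨((π.symm x : Fin (m*k)) : ℕ) / k, Nat.div_lt_of_lt_mul (lt_of_lt_of_le (π.symm x).isLt (le_of_eq (Nat.mul_comm m k)))⟩
    ⟨((π.symm x : Fin (m*k)) : ℕ) % k, Nat.mod_lt _ (by
      have ht := (π.symm x).isLt
      have hk : k ≠ 0 := by rintro rfl; omega
      omega)⟩

namespace HP

variable {m k : ℕ}

lemma bpos_eq (i : Fin m) (j : Fin k) : bpos m k i j = finProdFinEquiv (i, j) := by
  apply Fin.ext
  simp [bpos, finProdFinEquiv]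
  omega

/-- The permutation of `[m*k]` permuting the blocks by `b` and block `b i` internally
by `w i`. -/
def blockPerm (m k : ℕ) (b : Equiv.Perm (Fin m)) (w : Fin m → Equiv.Perm (Fin k)) :
    Equiv.Perm (Fin (m * k)) :=
  finProdFinEquiv.permCongr (Equiv.prodShear b w)

lemma blockPerm_apply (b : Equiv.Perm (Fin m)) (w : Fin m → Equiv.Perm (Fin k))
    (i : Fin m) (j : Fin k) :
    blockPerm m k b w (bpos m k i j) = bpos m k (b i) (w i j) := by
  simp [blockPerm, bpos_eq, Equiv.permCongr_apply]

lemma blockPerm_mul (b b' : Equiv.Perm (Fin m)) (w w' : Fin m → Equiv.Perm (Fin k)) :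
    blockPerm m k b w * blockPerm m k b' w'
      = blockPerm m k (b * b') (fun i => w (b' i) * w' i) := by
  apply Equiv.ext
  intro x
  obtain ⟨p, rfl⟩ : ∃ p, finProdFinEquiv p = x :=
    ⟨finProdFinEquiv.symm x, Equiv.apply_symm_apply _ _⟩
  obtain ⟨i, j⟩ := p
  rw [← bpos_eq, Equiv.Perm.mul_apply, blockPerm_apply, blockPerm_apply, blockPerm_apply]
  rfl

lemma blockPerm_one : blockPerm m k 1 (fun _ => 1) = 1 := by
  apply Equiv.ext
  intro x
  obtain ⟨p, rfl⟩ : ∃ p, finProdFinEquiv p = x :=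
    ⟨finProdFinEquiv.symm x, Equiv.apply_symm_apply _ _⟩
  obtain ⟨i, j⟩ := p
  rw [← bpos_eq, blockPerm_apply]
  rfl

lemma blockPerm_inv (b : Equiv.Perm (Fin m)) (w : Fin m → Equiv.Perm (Fin k)) :
    (blockPerm m k b w)⁻¹ = blockPerm m k b⁻¹ (fun i => (w (b⁻¹ i))⁻¹) := by
  rw [inv_eq_iff_mul_eq_one, blockPerm_mul]
  rw [show b * b⁻¹ = 1 from mul_inv_cancel b]
  rw [show (fun i => w (b⁻¹ i) * (w (b⁻¹ i))⁻¹) = fun _ => (1 : Equiv.Perm (Fin k)) from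
    funext fun i => mul_inv_cancel (w (b⁻¹ i))]
  exact blockPerm_one

lemma sign_blockPerm (hk : Even k) (b : Equiv.Perm (Fin m)) (w : Fin m → Equiv.Perm (Fin k)) :
    Equiv.Perm.sign (blockPerm m k b w) = ∏ i, Equiv.Perm.sign (w i) := by
  have hP : Equiv.prodShear b w
      = Equiv.prodCongrLeft (fun _ : Fin k => b) * Equiv.prodCongrRight w := by
    apply Equiv.ext
    rintro ⟨i, j⟩
    rfl
  rw [blockPerm, Equiv.Perm.sign_permCongr, hP, map_mul,
    Equiv.Perm.sign_prodCongrLeft, Equiv.Perm.sign_prodCongrRight]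
  have h0 : ∏ _j : Fin k, Equiv.Perm.sign b = Equiv.Perm.sign b ^ k := by
    simp [Finset.prod_const]
  have h1 : Equiv.Perm.sign b ^ k = 1 := by
    obtain ⟨c, hc⟩ := hk
    rw [hc, show c + c = 2 * c by ring, pow_mul, Int.units_sq, one_pow]
  rw [h0, h1, one_mul]

/-- `η` permutes the blocks. -/
def IsBP (m k : ℕ) (η : Equiv.Perm (Fin (m * k))) : Prop :=
  ∃ b w, η = blockPerm m k b w

lemma IsBP.mul {η η' : Equiv.Perm (Fin (m * k))} (h : IsBP m k η) (h' : IsBP m k η') :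
    IsBP m k (η * η') := by
  obtain ⟨b, w, rfl⟩ := h
  obtain ⟨b', w', rfl⟩ := h'
  exact ⟨_, _, blockPerm_mul b b' w w'⟩

lemma IsBP.inv {η : Equiv.Perm (Fin (m * k))} (h : IsBP m k η) : IsBP m k η⁻¹ := by
  obtain ⟨b, w, rfl⟩ := h
  exact ⟨_, _, blockPerm_inv b w⟩

lemma bpos_injective (i : Fin m) : Function.Injective (fun j : Fin k => bpos m k i j) := by
  intro a a' h
  have := congrArg Fin.val h
  simp only [bpos] at this
  exact Fin.ext (by omega)

lemma bpos_injective_left (j : Fin k) :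
    Function.Injective (fun i : Fin m => bpos m k i j) := by
  intro a a' h
  have := congrArg Fin.val h
  simp only [bpos] at this
  have hk0 : 0 < k := j.pos
  apply Fin.ext
  nlinarith [a.isLt, a'.isLt]

/-- The within-block sorting permutations for `π`. -/
def sortW (π : Equiv.Perm (Fin (m * k))) : Fin m → Equiv.Perm (Fin k) :=
  fun i => Tuple.sort (fun j => π (bpos m k i j))

/-- The block-sorting permutation for `π` (after within-block sorting). -/
def sortB (π : Equiv.Perm (Fin (m * k))) : Equiv.Perm (Fin m) :=
  if h : 0 < k then
    Tuple.sort (fun i => (π * blockPerm m k 1 (sortW π)) (bpos m k i ⟨0, h⟩))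
  else 1

/-- The canonical representative in the coset of `π` modulo block permutations. -/
def normPerm (m k : ℕ) (π : Equiv.Perm (Fin (m * k))) : Equiv.Perm (Fin (m * k)) :=
  π * blockPerm m k 1 (sortW π) * blockPerm m k (sortB π) 1

lemma norm_coset (π : Equiv.Perm (Fin (m * k))) : IsBP m k (π⁻¹ * normPerm m k π) := by
  have : π⁻¹ * normPerm m k π = blockPerm m k 1 (sortW π) * blockPerm m k (sortB π) 1 := by
    rw [normPerm]; group
  rw [this]
  exact IsBP.mul ⟨_, _, rfl⟩ ⟨_, _, rfl⟩

lemma normPerm_apply (π : Equiv.Perm (Fin (m * k))) (i : Fin m) (j : Fin k) :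
    normPerm m k π (bpos m k i j)
      = π (bpos m k (sortB π i) (sortW π (sortB π i) j)) := by
  rw [normPerm, Equiv.Perm.mul_apply, blockPerm_apply, Equiv.Perm.mul_apply,
    blockPerm_apply]
  rfl

lemma strictMono_block (π : Equiv.Perm (Fin (m * k))) (i : Fin m) :
    StrictMono fun j : Fin k => π (bpos m k i (sortW π i j)) := by
  have hmono : Monotone ((fun j => π (bpos m k i j)) ∘ (sortW π i)) :=
    Tuple.monotone_sort _
  have hinj : Function.Injective ((fun j => π (bpos m k i j)) ∘ (sortW π i)) :=
    (π.injective.comp (bpos_injective i)).comp (sortW π i).injective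
  exact hmono.strictMono_of_injective hinj

lemma norm_isPartRep (hk0 : 0 < k) (π : Equiv.Perm (Fin (m * k))) :
    IsPartRep m k (normPerm m k π) := by
  have hblock : ∀ i : Fin m, StrictMono fun j : Fin k => normPerm m k π (bpos m k i j) := by
    intro i
    have : (fun j : Fin k => normPerm m k π (bpos m k i j))
        = fun j => π (bpos m k (sortB π i) (sortW π (sortB π i) j)) :=
      funext fun j => normPerm_apply π i j
    rw [this]
    exact strictMono_block π (sortB π i)
  constructor
  · exact hblock
  · -- lead monotonicity
    intro i i' j hii'
    have hLmono : Monotone ((fun i : Fin m =>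
        (π * blockPerm m k 1 (sortW π)) (bpos m k i ⟨0, hk0⟩)) ∘ (sortB π)) := by
      rw [sortB, dif_pos hk0]
      exact Tuple.monotone_sort _
    have hLinj : Function.Injective ((fun i : Fin m =>
        (π * blockPerm m k 1 (sortW π)) (bpos m k i ⟨0, hk0⟩)) ∘ (sortB π)) :=
      (((π * blockPerm m k 1 (sortW π)).injective.comp
        (bpos_injective_left ⟨0, hk0⟩))).comp (sortB π).injective
    have hS := hLmono.strictMono_of_injective hLinj hii'
    have hrw : ∀ a : Fin m, ((fun i : Fin m =>
        (π * blockPerm m k 1 (sortW π)) (bpos m k i ⟨0, hk0⟩)) ∘ (sortB π)) a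
        = normPerm m k π (bpos m k a ⟨0, hk0⟩) := by
      intro a
      rw [normPerm_apply]
      simp only [Function.comp_apply, Equiv.Perm.mul_apply, blockPerm_apply,
        Equiv.Perm.one_apply]
    rw [hrw i, hrw i'] at hS
    exact hS

lemma strictMono_perm_eq_one {N : ℕ} (g : Equiv.Perm (Fin N)) (h : StrictMono ⇑g) :
    g = 1 := by
  have : ⇑g = id := by
    apply (h.range_inj strictMono_id).mp
    rw [g.surjective.range_eq, Set.range_id]
  exact Equiv.ext fun x => congrFun this x

lemma rep_unique (hk0 : 0 < k) {r : Equiv.Perm (Fin (m * k))} (hr : IsPartRep m k r)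
    (b : Equiv.Perm (Fin m)) (w : Fin m → Equiv.Perm (Fin k))
    (hr' : IsPartRep m k (r * blockPerm m k b w)) :
    r * blockPerm m k b w = r := by
  have happ : ∀ i j, (r * blockPerm m k b w) (bpos m k i j) = r (bpos m k (b i) (w i j)) := by
    intro i j
    rw [Equiv.Perm.mul_apply, blockPerm_apply]
  have hw : ∀ i, w i = 1 := by
    intro i
    have hg : StrictMono fun j => r (bpos m k (b i) j) := hr.1 (b i)
    have hgw : StrictMono fun j => r (bpos m k (b i) (w i j)) := by
      have h1 := hr'.1 i
      simpa only [happ] using h1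
    have hwmono : StrictMono ⇑(w i) := fun a a' haa' => hg.lt_iff_lt.mp (hgw haa')
    exact strictMono_perm_eq_one _ hwmono
  have hb : b = 1 := by
    have hL : StrictMono fun a : Fin m => r (bpos m k a ⟨0, hk0⟩) :=
      fun a a' h => hr.2 a a' ⟨0, hk0⟩ h
    have hL' : StrictMono fun a : Fin m => r (bpos m k (b a) ⟨0, hk0⟩) := by
      intro a a' h
      have h2 := hr'.2 a a' ⟨0, hk0⟩ h
      simp only [happ, hw, Equiv.Perm.one_apply] at h2
      exact h2
    have hbmono : StrictMono ⇑b := fun a a' h => hL.lt_iff_lt.mp (hL' h)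
    exact strictMono_perm_eq_one _ hbmono
  rw [hb, show w = fun _ => 1 from funext hw, blockPerm_one, mul_one]

lemma norm_eq_of_rep (hk0 : 0 < k) {r : Equiv.Perm (Fin (m * k))} (hr : IsPartRep m k r) :
    normPerm m k r = r := by
  obtain ⟨b, w, hbw⟩ := norm_coset r
  have h : normPerm m k r = r * blockPerm m k b w := by
    rw [← hbw]; group
  rw [h]
  exact rep_unique hk0 hr b w (h ▸ norm_isPartRep hk0 r)

lemma norm_mul_bp (hk0 : 0 < k) (π η : Equiv.Perm (Fin (m * k))) (hη : IsBP m k η) :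
    normPerm m k (π * η) = normPerm m k π := by
  obtain ⟨b, w, hbw⟩ := ((norm_coset π).inv.mul (hη.mul (norm_coset (π * η))))
  have key : normPerm m k (π * η) = normPerm m k π * blockPerm m k b w := by
    rw [← hbw]; group
  rw [key]
  exact rep_unique hk0 (norm_isPartRep hk0 π) b w (key ▸ norm_isPartRep hk0 (π * η))

lemma phi_invariance {R : Type*} [CommRing R] (hk : Even k)
    {f : (Fin k → Fin (m * k)) → R} (hf : IsSkewFun f)
    (π : Equiv.Perm (Fin (m * k))) (b : Equiv.Perm (Fin m))
    (w : Fin m → Equiv.Perm (Fin k)) :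
    (Equiv.Perm.sign (π * blockPerm m k b w) : ℤ) •
        ∏ i : Fin m, f (fun j => (π * blockPerm m k b w) (bpos m k i j))
      = (Equiv.Perm.sign π : ℤ) • ∏ i : Fin m, f (fun j => π (bpos m k i j)) := by
  have happ : ∀ (i : Fin m) (j : Fin k),
      (π * blockPerm m k b w) (bpos m k i j) = π (bpos m k (b i) (w i j)) := by
    intro i j
    rw [Equiv.Perm.mul_apply, blockPerm_apply]
  have hterm : ∀ i : Fin m, f (fun j => π (bpos m k (b i) (w i j)))
      = (Equiv.Perm.sign (w i) : ℤ) • f (fun j => π (bpos m k (b i) j)) :=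
    fun i => hf (w i) (fun j => π (bpos m k (b i) j))
  have hsign : ((Equiv.Perm.sign (π * blockPerm m k b w) : ℤ) : R)
      = ((Equiv.Perm.sign π : ℤ) : R)
        * ∏ i : Fin m, ((Equiv.Perm.sign (w i) : ℤ) : R) := by
    rw [map_mul, sign_blockPerm hk, Units.val_mul, Int.cast_mul]
    congr 1
    push_cast
    rfl
  have hP2 : (∏ i : Fin m, ((Equiv.Perm.sign (w i) : ℤ) : R))
      * (∏ i : Fin m, ((Equiv.Perm.sign (w i) : ℤ) : R)) = 1 := by
    rw [← Finset.prod_mul_distrib]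
    apply Finset.prod_eq_one
    intro i _
    rw [← Int.cast_mul, ← Units.val_mul, Int.units_mul_self, Units.val_one, Int.cast_one]
  simp only [happ, hterm, zsmul_eq_mul, Finset.prod_mul_distrib]
  rw [hsign]
  rw [Equiv.prod_comp b (fun i => f (fun j => π (bpos m k i j)))]
  rw [show ∀ a c d : R, a * c * (c * d) = a * (c * c) * d from fun a c d => by ring]
  rw [hP2, mul_one]

end HP


end
theorem stmt1 (m k : ℕ) (hk : Even k) {R : Type*} [CommRing R]
    (f : (Fin k → Fin (m * k)) → R) (hf : IsSkewFun f)
    (σ : Equiv.Perm (Fin (m * k))) :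
    IsSkewFun (fun v : Fin k → Fin (m * k) => f (⇑σ ∘ v)) ∧
      hyperPf m k (fun v => f (⇑σ ∘ v))
        = (Equiv.Perm.sign σ : ℤ) • hyperPf m k f := by
  constructor
  · intro tau v
    exact hf tau (⇑σ ∘ v)
  · by_cases hmk : m * k = 0
    · have hσ : σ = 1 := Equiv.ext fun x => absurd x.isLt (by omega)
      rw [hσ]
      simp
    · have hk0 : 0 < k := Nat.pos_of_ne_zero fun h => hmk (by rw [h, Nat.mul_zero])
      rw [hyperPf, hyperPf, Finset.smul_sum]
      refine Finset.sum_bij' (fun r _ => HP.normPerm m k (σ * r))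
        (fun r _ => HP.normPerm m k (σ⁻¹ * r)) ?_ ?_ ?_ ?_ ?_
      · intro r hr
        simp only [Finset.mem_filter, Finset.mem_univ, true_and]
        exact HP.norm_isPartRep hk0 _
      · intro r hr
        simp only [Finset.mem_filter, Finset.mem_univ, true_and]
        exact HP.norm_isPartRep hk0 _
      · intro r hr
        simp only [Finset.mem_filter, Finset.mem_univ, true_and] at hr
        have h1 : HP.IsBP m k ((σ * r)⁻¹ * HP.normPerm m k (σ * r)) := HP.norm_coset _
        have h2 : σ⁻¹ * HP.normPerm m k (σ * r)
            = r * ((σ * r)⁻¹ * HP.normPerm m k (σ * r)) := by group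
        rw [h2, HP.norm_mul_bp hk0 r _ h1, HP.norm_eq_of_rep hk0 hr]
      · intro r hr
        simp only [Finset.mem_filter, Finset.mem_univ, true_and] at hr
        have h1 : HP.IsBP m k ((σ⁻¹ * r)⁻¹ * HP.normPerm m k (σ⁻¹ * r)) := HP.norm_coset _
        have h2 : σ * HP.normPerm m k (σ⁻¹ * r)
            = r * ((σ⁻¹ * r)⁻¹ * HP.normPerm m k (σ⁻¹ * r)) := by group
        rw [h2, HP.norm_mul_bp hk0 r _ h1, HP.norm_eq_of_rep hk0 hr]
      · intro r hr
        obtain ⟨b, w, hbw⟩ := HP.norm_coset (σ * r)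
        have h2 : HP.normPerm m k (σ * r) = (σ * r) * HP.blockPerm m k b w := by
          rw [← hbw]; group
        rw [h2, HP.phi_invariance hk hf (σ * r) b w]
        have hsgn : (Equiv.Perm.sign σ : ℤ) * (Equiv.Perm.sign (σ * r) : ℤ)
            = (Equiv.Perm.sign r : ℤ) := by
          rw [← Units.val_mul, map_mul, ← mul_assoc, Int.units_mul_self, one_mul]
        rw [smul_smul, hsgn]
        rfl
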